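/- Let α, β ∈ ℝ⁺ \ {1}, φ₁, φ₂, ψ entire, Θₙ(x) = α^{φ₁(x)} (dⁿ/dxⁿ)(ψ(x) β^{−φ₂(x)}), and let Ω : ℕ → ℂ be any sequence and (a_k) a sequence of complex numbers. Define Λ(z) = ∑_{k=0}^∞ a_k Ω(k) z^k and Φₙ(x; ζ) = ∑_{k=0}^{⌊n/p⌋} (a_k / (n−pk)!) Θ_{n−pk}(x) Ω(k) ζ^k for a fixed p ∈ ℕ, p ≥ 1. Then, assuming all series converge absolutely, ∑_{n=0}^∞ Φₙ(x; η/t^p) tⁿ = α^{φ₁(x)} ψ(x+t) β^{−φ₂(x+t)} · Λ(η) for t ≠ 0. -/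

import Mathlib

open Complex Finset

theorem bilateral_generating_function
    (α β : ℝ) (hα : 0 < α) (hα1 : α ≠ 1) (hβ : 0 < β) (hβ1 : β ≠ 1)
    (φ₁ φ₂ ψ : ℂ → ℂ) (hφ₁ : Differentiable ℂ φ₁) (hφ₂ : Differentiable ℂ φ₂)
    (hψ : Differentiable ℂ ψ)
    (Θ : ℕ → ℂ → ℂ)
    (hΘ : ∀ n x, Θ n x = Complex.exp (φ₁ x * (Real.log α : ℂ)) *
      iteratedDeriv n (fun z => ψ z * Complex.exp (-(φ₂ z) * (Real.log β : ℂ))) x)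
    (Ω : ℕ → ℂ) (a : ℕ → ℂ) (p : ℕ) (hp : 1 ≤ p)
    (x t η : ℂ) (ht : t ≠ 0) (L : ℂ)
    (hΛ : HasSum (fun k : ℕ => a k * Ω k * η ^ k) L)
    (habs : Summable (fun nk : ℕ × ℕ =>
      ‖a nk.2 * Θ nk.1 x * Ω nk.2 * η ^ nk.2 * t ^ nk.1 / (nk.1.factorial : ℂ)‖))
    (Φ : ℕ → ℂ → ℂ)
    (hΦ : ∀ n ζ, Φ n ζ = ∑ k ∈ Finset.range (n / p + 1),
      a k / ((n - p * k).factorial : ℂ) * Θ (n - p * k) x * Ω k * ζ ^ k) :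
    HasSum (fun n : ℕ => Φ n (η / t ^ p) * t ^ n)
      (Complex.exp (φ₁ x * (Real.log α : ℂ)) * ψ (x + t) *
        Complex.exp (-(φ₂ (x + t)) * (Real.log β : ℂ)) * L) := by
  set c₁ : ℂ := Complex.exp (φ₁ x * (Real.log α : ℂ)) with hc₁
  set f : ℂ → ℂ := fun z => ψ z * Complex.exp (-(φ₂ z) * (Real.log β : ℂ)) with hf
  have hfd : Differentiable ℂ f :=
    hψ.mul (((hφ₂.neg).mul_const _).cexp)
  -- Taylor series of f
  have hTay := Complex.hasSum_taylorSeries_of_entire hfd x (x + t)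
  have h1 : HasSum (fun n : ℕ => Θ n x * t ^ n / (n.factorial : ℂ)) (c₁ * f (x + t)) := by
    have := hTay.mul_left c₁
    refine this.congr_fun fun n => ?_
    rw [hΘ]
    simp only [add_sub_cancel_left, smul_eq_mul]
    ring
  -- product sum over pairs
  set F₁ : ℕ → ℂ := fun n => Θ n x * t ^ n / (n.factorial : ℂ) with hF₁
  set F₂ : ℕ → ℂ := fun k => a k * Ω k * η ^ k with hF₂
  have hsum : Summable (fun nk : ℕ × ℕ => F₁ nk.1 * F₂ nk.2) := by
    have : Summable (fun nk : ℕ × ℕ =>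
        a nk.2 * Θ nk.1 x * Ω nk.2 * η ^ nk.2 * t ^ nk.1 / (nk.1.factorial : ℂ)) :=
      habs.of_norm
    refine this.congr fun nk => ?_
    simp only [hF₁, hF₂]
    ring
  have hProd : HasSum (fun nk : ℕ × ℕ => F₁ nk.1 * F₂ nk.2) (c₁ * f (x + t) * L) :=
    h1.mul hΛ hsum
  -- reindex
  set h : ℕ × ℕ → ℂ := fun nk =>
    if p * nk.2 ≤ nk.1 then F₁ (nk.1 - p * nk.2) * F₂ nk.2 else 0 with hh
  have hinj : Function.Injective (fun mk : ℕ × ℕ => (mk.1 + p * mk.2, mk.2)) := by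
    intro ⟨m₁, k₁⟩ ⟨m₂, k₂⟩ hmk
    simp only [Prod.mk.injEq] at hmk
    obtain ⟨h1', h2'⟩ := hmk
    subst h2'
    exact Prod.ext (by omega) rfl
  have hH : HasSum h (c₁ * f (x + t) * L) := by
    rw [← hinj.hasSum_iff ?_]
    · refine hProd.congr_fun fun mk => ?_
      simp only [hh, Function.comp]
      rw [if_pos (Nat.le_add_left _ _)]
      simp
    · rintro ⟨n, k⟩ hc
      simp only [hh]
      rw [if_neg]
      intro hle
      exact hc ⟨(n - p * k, k), by simp [Prod.ext_iff]; omega⟩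
  -- fiberwise
  have hfib : ∀ n : ℕ, HasSum (fun k => h (n, k)) (Φ n (η / t ^ p) * t ^ n) := by
    intro n
    have h0 : ∀ k ∉ Finset.range (n / p + 1), h (n, k) = 0 := by
      intro k hk
      simp only [Finset.mem_range, Nat.lt_add_one_iff, not_le] at hk
      simp only [hh]
      rw [if_neg]
      intro hle
      have : k ≤ n / p := (Nat.le_div_iff_mul_le (by omega)).mpr (by rw [Nat.mul_comm]; exact hle)
      omega
    have : HasSum (fun k => h (n, k)) _ := hasSum_sum_of_ne_finset_zero h0
    convert this using 1
    rw [hΦ, Finset.sum_mul]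
    refine Finset.sum_congr rfl fun k hk => ?_
    simp only [Finset.mem_range, Nat.lt_add_one_iff] at hk
    have hpk : p * k ≤ n := by
      have := (Nat.le_div_iff_mul_le (show 0 < p by omega)).mp hk
      rwa [Nat.mul_comm] at this
    simp only [hh, if_pos hpk, hF₁, hF₂]
    have htp : (t ^ p) ^ k ≠ 0 := pow_ne_zero _ (pow_ne_zero _ ht)
    have hfac : ((n - p * k).factorial : ℂ) ≠ 0 := by
      exact_mod_cast Nat.factorial_ne_zero _
    have htn : t ^ n = t ^ (n - p * k) * (t ^ p) ^ k := by
      rw [← pow_mul, ← pow_add]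
      congr 1
      omega
    rw [htn]
    field_simp
    have hinv : t ^ (p * k) * t⁻¹ ^ (p * k) = 1 := by rw [← mul_pow, mul_inv_cancel₀ ht, one_pow]
    linear_combination (a k * Θ (n - p * k) x * Ω k * η ^ k) * hinv
  have hrw : c₁ * ψ (x + t) * Complex.exp (-(φ₂ (x + t)) * (Real.log β : ℂ)) * L =
      c₁ * f (x + t) * L := by
    simp only [hf]; ring
  rw [hrw]
  exact hH.prod_fiberwise hfib
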